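/- Let N ⊂ k[x₁,x₂] be a finite order ideal of monomials and for each e ≥ 0 let λₑ = |{a : x₁ᵃx₂ᵉ ∈ N}|. Then the monomial ideal I with escalier N is stable if and only if the sequence (λ₀, λ₁, ..., λ_{h-1}) of nonzero values is strictly decreasing, i.e., λ₀ > λ₁ > ... > λ_{h-1} > 0. -/

import Mathlib

def IsStable {n : ℕ} (I : Set (Fin n → ℕ)) : Prop :=
  ∀ τ ∈ I, ∀ m j : Fin n, τ m ≠ 0 → (∀ l, l < m → τ l = 0) → m < j →
    τ - Pi.single m 1 + Pi.single j 1 ∈ I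

def mon2 (a e : ℕ) : Fin 2 → ℕ := ![a, e]

/-- A finite downward-closed set of naturals is an initial segment. -/
lemma mem_iff_lt_card {s : Set ℕ} (hs : s.Finite)
    (hd : ∀ a ∈ s, ∀ b ≤ a, b ∈ s) : ∀ a, a ∈ s ↔ a < Nat.card s := by
  rcases s.eq_empty_or_nonempty with h | h
  · subst h; simp
  · obtain ⟨M, hM, hmax⟩ := Set.Finite.exists_maximalFor id s hs h
    have hsIic : s = Set.Iic M := by
      ext x
      constructor
      · intro hx
        by_contra hx'
        have : M = x := le_antisymm (le_of_not_ge hx') (hmax hx (le_of_not_ge hx'))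
        exact hx' (le_of_eq this.symm)
      · intro hx
        exact hd M hM x hx
    intro a
    rw [hsIic]
    simp [Nat.card_eq_card_toFinset, Nat.lt_succ_iff]

theorem stable_iff_strictly_decreasing_rows (N : Set (Fin 2 → ℕ))
    (hfin : N.Finite)
    (hord : ∀ τ ∈ N, ∀ σ : Fin 2 → ℕ, σ ≤ τ → σ ∈ N) :
    IsStable {τ : Fin 2 → ℕ | τ ∉ N} ↔
      ∀ e : ℕ, 0 < Nat.card {a : ℕ | mon2 a (e + 1) ∈ N} →
        Nat.card {a : ℕ | mon2 a (e + 1) ∈ N} < Nat.card {a : ℕ | mon2 a e ∈ N} := by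
  -- membership characterization of each row
  have hrowfin : ∀ e : ℕ, ({a : ℕ | mon2 a e ∈ N}).Finite := by
    intro e
    apply Set.Finite.subset (hfin.image (fun τ => τ 0))
    intro a ha
    exact ⟨mon2 a e, ha, rfl⟩
  have hrowdc : ∀ e : ℕ, ∀ a ∈ {a : ℕ | mon2 a e ∈ N}, ∀ b ≤ a,
      b ∈ {a : ℕ | mon2 a e ∈ N} := by
    intro e a ha b hb
    refine hord _ ha (mon2 b e) ?_
    intro i
    fin_cases i <;> simp [mon2, hb]
  have hmem : ∀ a e : ℕ, mon2 a e ∈ N ↔ a < Nat.card {a : ℕ | mon2 a e ∈ N} := by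
    intro a e
    exact mem_iff_lt_card (hrowfin e) (hrowdc e) a
  -- stability in two variables, restated
  have key : IsStable {τ : Fin 2 → ℕ | τ ∉ N} ↔
      ∀ a e : ℕ, mon2 a (e + 1) ∈ N → mon2 (a + 1) e ∈ N := by
    constructor
    · intro hst a e hmem'
      by_contra hne
      have h1 : mon2 (a + 1) e ∈ {τ : Fin 2 → ℕ | τ ∉ N} := hne
      have h2 := hst _ h1 0 1 (by simp [mon2]) (by intro l hl; exact absurd hl (by simp))
        (by decide)
      apply h2
      have : mon2 (a + 1) e - Pi.single 0 1 + Pi.single 1 1 = mon2 a (e + 1) := by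
        funext i
        fin_cases i <;> simp [mon2, Pi.single_apply, Matrix.vecHead, Matrix.vecTail, Function.comp]
      rw [this]
      exact hmem'
    · intro h τ hτ m j hm h0 hmj
      have hj : j = 1 := by omega
      have hm0 : m = 0 := by omega
      subst hj; subst hm0
      intro hcon
      apply hτ
      have hτeq : τ = mon2 (τ 0) (τ 1) := by
        funext i; fin_cases i <;> simp [mon2]
      have ha : τ 0 ≠ 0 := hm
      have : τ - Pi.single 0 1 + Pi.single 1 1 = mon2 (τ 0 - 1) (τ 1 + 1) := by
        funext i
        fin_cases i <;> simp [mon2, Pi.single_apply, Matrix.vecHead, Matrix.vecTail, Function.comp]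
      rw [this] at hcon
      have := h (τ 0 - 1) (τ 1) hcon
      rw [hτeq]
      have heq : τ 0 - 1 + 1 = τ 0 := by omega
      rwa [heq] at this
  rw [key]
  constructor
  · intro h e hpos
    have h1 : mon2 (Nat.card {a : ℕ | mon2 a (e + 1) ∈ N} - 1) (e + 1) ∈ N := by
      rw [hmem]; omega
    have h2 := h _ _ h1
    rw [hmem] at h2
    omega
  · intro h a e hmem'
    rw [hmem] at hmem' ⊢
    have hpos : 0 < Nat.card {a : ℕ | mon2 a (e + 1) ∈ N} := by omega
    have := h e hpos
    omega
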